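/- Let s₁ < s₂ be real numbers, let u : (s₁,s₂) → ℝ be a differentiable function such that u(s) → -∞ as s → s₁ from above and as s → s₂ from below, and let g : (s₁,s₂) → ℝ be a continuous function with |g(s)| ≤ 1 for all s ∈ (s₁,s₂). Then there exists s₀ ∈ (s₁,s₂) such that u'(s₀) + g(s₀) = 0. -/

import Mathlib

open Real Set Filter Topology

/-- a calculus lemma.  If `u` is differentiable on `(s₁,s₂)` and tends to `-∞`
at both endpoints, and `g` is continuous with `|g| ≤ 1` on `(s₁,s₂)`, then
`u'(s₀) + g(s₀) = 0` for some interior point `s₀`. -/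
theorem stmt_8 (s₁ s₂ : ℝ) (h12 : s₁ < s₂) (u g : ℝ → ℝ)
    (hu : ∀ s ∈ Set.Ioo s₁ s₂, DifferentiableAt ℝ u s)
    (hu1 : Filter.Tendsto u (𝓝[>] s₁) Filter.atBot)
    (hu2 : Filter.Tendsto u (𝓝[<] s₂) Filter.atBot)
    (hg : ContinuousOn g (Set.Ioo s₁ s₂))
    (hgb : ∀ s ∈ Set.Ioo s₁ s₂, |g s| ≤ 1) :
    ∃ s₀ ∈ Set.Ioo s₁ s₂, deriv u s₀ + g s₀ = 0 := by
  set m := (s₁ + s₂) / 2 with hm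
  have hmI : m ∈ Set.Ioo s₁ s₂ := ⟨by simp [hm]; linarith, by simp [hm]; linarith⟩
  have hgc : ∀ s ∈ Set.Ioo s₁ s₂, ContinuousAt g s := fun s hs =>
    hg.continuousAt (Ioo_mem_nhds hs.1 hs.2)
  set G := fun s => ∫ t in m..s, g t with hGdef
  -- interval integrability
  have huIcc : ∀ s ∈ Set.Ioo s₁ s₂, Set.uIcc m s ⊆ Set.Ioo s₁ s₂ := fun s hs =>
    Set.ordConnected_Ioo.uIcc_subset hmI hs
  have hint : ∀ s ∈ Set.Ioo s₁ s₂, IntervalIntegrable g MeasureTheory.volume m s := by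
    intro s hs
    exact (hg.mono (huIcc s hs)).intervalIntegrable
  -- derivative of G
  have hGd : ∀ s ∈ Set.Ioo s₁ s₂, HasDerivAt G (g s) s := by
    intro s hs
    exact intervalIntegral.integral_hasDerivAt_right (hint s hs)
      (ContinuousAt.stronglyMeasurableAtFilter isOpen_Ioo hgc s hs) (hgc s hs)
  -- bound on G
  have hGb : ∀ s ∈ Set.Ioo s₁ s₂, |G s| ≤ s₂ - s₁ := by
    intro s hs
    have h1 : ‖∫ t in m..s, g t‖ ≤ 1 * |s - m| := by
      apply intervalIntegral.norm_integral_le_of_norm_le_const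
      intro x hx
      have hx' : x ∈ Set.Ioo s₁ s₂ := huIcc s hs (Set.uIoc_subset_uIcc hx)
      simpa using hgb x hx'
    have h2 : |s - m| ≤ s₂ - s₁ := by
      rw [abs_sub_le_iff]
      constructor <;> [skip; skip] <;>
        (first | linarith [hs.1, hs.2, hmI.1, hmI.2])
    calc |G s| = ‖∫ t in m..s, g t‖ := rfl
      _ ≤ 1 * |s - m| := h1
      _ ≤ s₂ - s₁ := by linarith
  set P := fun s => u s + G s with hPdef
  -- P tends to -∞ at both endpoints
  have hPle : ∀ s ∈ Set.Ioo s₁ s₂, P s ≤ u s + (s₂ - s₁) := by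
    intro s hs
    have := (abs_le.1 (hGb s hs)).2
    simp only [hPdef]; linarith
  have hP1 : Filter.Tendsto P (𝓝[>] s₁) Filter.atBot := by
    apply tendsto_atBot_mono' _ _ (tendsto_atBot_add_const_right _ (s₂ - s₁) hu1)
    filter_upwards [Ioo_mem_nhdsGT_of_mem ⟨le_refl s₁, h12⟩] with s hs
    exact hPle s hs
  have hP2 : Filter.Tendsto P (𝓝[<] s₂) Filter.atBot := by
    apply tendsto_atBot_mono' _ _ (tendsto_atBot_add_const_right _ (s₂ - s₁) hu2)
    filter_upwards [Ioo_mem_nhdsLT_of_mem ⟨h12, le_refl s₂⟩] with s hs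
    exact hPle s hs
  -- find a, b near the endpoints where P is small
  have hev1 : ∀ᶠ s in 𝓝[>] s₁, P s ≤ P m - 1 := hP1.eventually (eventually_le_atBot _)
  have hev2 : ∀ᶠ s in 𝓝[<] s₂, P s ≤ P m - 1 := hP2.eventually (eventually_le_atBot _)
  obtain ⟨a, ha1, ha2⟩ := (mem_nhdsGT_iff_exists_Ioo_subset).1 hev1
  obtain ⟨b, hb1, hb2⟩ := (mem_nhdsLT_iff_exists_Ioo_subset).1 hev2
  simp only [Set.mem_Ioi, Set.mem_Iio] at ha1 hb1
  have ham : a ≤ m := by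
    by_contra h
    push_neg at h
    have := ha2 ⟨hmI.1, h⟩
    simp only [Set.mem_setOf_eq] at this; linarith
  have hbm : m ≤ b := by
    by_contra h
    push_neg at h
    have := hb2 ⟨h, hmI.2⟩
    simp only [Set.mem_setOf_eq] at this; linarith
  set a' := (s₁ + a) / 2 with ha'
  set b' := (b + s₂) / 2 with hb'
  have ha'1 : s₁ < a' := by simp [ha']; linarith
  have ha'2 : a' < a := by simp [ha']; linarith
  have hb'1 : b < b' := by simp [hb']; linarith
  have hb'2 : b' < s₂ := by simp [hb']; linarith
  have hsub : Set.Icc a' b' ⊆ Set.Ioo s₁ s₂ := fun x hx =>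
    ⟨lt_of_lt_of_le ha'1 hx.1, lt_of_le_of_lt hx.2 hb'2⟩
  -- continuity of P on the compact interval
  have hPc : ContinuousOn P (Set.Icc a' b') := by
    intro x hx
    have hx' := hsub hx
    exact ((hu x hx').continuousAt.add (hGd x hx').continuousAt).continuousWithinAt
  have hne : (Set.Icc a' b').Nonempty := ⟨m, by constructor <;> linarith⟩
  obtain ⟨x, hxmem, hxmax⟩ := (isCompact_Icc).exists_isMaxOn hne hPc
  have hxI : x ∈ Set.Ioo s₁ s₂ := hsub hxmem
  have hPm : P m ≤ P x := hxmax ⟨by linarith, by linarith⟩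
  -- x is interior to [a', b']
  have hxa : a' < x := by
    rcases lt_or_eq_of_le hxmem.1 with h | h
    · exact h
    · exfalso
      have h2 := ha2 ⟨ha'1, ha'2⟩
      simp only [Set.mem_setOf_eq] at h2
      rw [h] at h2
      linarith
  have hxb : x < b' := by
    rcases lt_or_eq_of_le hxmem.2 with h | h
    · exact h
    · exfalso
      have h2 := hb2 ⟨hb'1, hb'2⟩
      simp only [Set.mem_setOf_eq] at h2
      rw [← h] at h2
      linarith
  have hloc : IsLocalMax P x := hxmax.isLocalMax (Icc_mem_nhds hxa hxb)
  have hder : HasDerivAt P (deriv u x + g x) x :=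
    (hu x hxI).hasDerivAt.add (hGd x hxI)
  exact ⟨x, hxI, hloc.hasDerivAt_eq_zero hder⟩
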